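/- Assume k contains a primitive n-th root of unity and char k does not divide n. Let ψ̄ ∈ Sp(K(n)) and let χ₁, χ₂ be two symmetric ψ̄-semi-characters. Then the ratio χ₁·χ₂⁻¹ : K(n) → kˣ is a group homomorphism taking values in {±1}, and there exists c ∈ K(n) with 2c = 0 such that χ₁(v) = χ₂(v)·e_n(c, v) for all v ∈ K(n). In particular, if n is odd then χ₁ = χ₂, so for odd n there is a unique symmetric ψ̄-semi-character. -/

import Mathlib

namespace ThetaPaper

variable {g n : ℕ} {k : Type*} [Field k]

/-- `Z(n) = (ℤ/nℤ)^g`. -/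
abbrev ZGrp (g n : ℕ) := Fin g → ZMod n

/-- `Ẑ(n) = Hom(Z(n), kˣ)`, the group of `kˣ`-valued characters of `Z(n)`,
written additively. -/
abbrev ZHat (g n : ℕ) (k : Type*) [Field k] := AddChar (ZGrp g n) kˣ

/-- `K(n) = Z(n) × Ẑ(n)`. -/
abbrev KGrp (g n : ℕ) (k : Type*) [Field k] := ZGrp g n × ZHat g n k

/-- The commutator pairing `e_n((x₁,y₁),(x₂,y₂)) = y₁(x₂)·y₂(x₁)⁻¹`. -/
def en (v w : KGrp g n k) : kˣ := v.2 w.1 * (w.2 v.1)⁻¹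

/-- The level-`n` Heisenberg group `G(n)`, as the set `kˣ × Z(n) × Ẑ(n)`. -/
@[ext]
structure Heis (g n : ℕ) (k : Type*) [Field k] where
  t : kˣ
  x : ZGrp g n
  y : ZHat g n k

namespace Heis

/-- The Heisenberg multiplication
`(α₁,x₁,y₁)·(α₂,x₂,y₂) = (α₁α₂·y₂(x₁), x₁+x₂, y₁+y₂)`. -/
instance : Mul (Heis g n k) :=
  ⟨fun a b => ⟨a.t * b.t * b.y a.x, a.x + b.x, a.y + b.y⟩⟩

instance : One (Heis g n k) := ⟨⟨1, 0, 0⟩⟩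

instance : Inv (Heis g n k) :=
  ⟨fun a => ⟨a.t⁻¹ * a.y a.x, -a.x, -a.y⟩⟩

@[simp] lemma mul_t (a b : Heis g n k) : (a * b).t = a.t * b.t * b.y a.x := rfl
@[simp] lemma mul_x (a b : Heis g n k) : (a * b).x = a.x + b.x := rfl
@[simp] lemma mul_y (a b : Heis g n k) : (a * b).y = a.y + b.y := rfl
@[simp] lemma one_t : (1 : Heis g n k).t = 1 := rfl
@[simp] lemma one_x : (1 : Heis g n k).x = 0 := rfl
@[simp] lemma one_y : (1 : Heis g n k).y = 0 := rfl
@[simp] lemma inv_t (a : Heis g n k) : a⁻¹.t = a.t⁻¹ * a.y a.x := rfl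
@[simp] lemma inv_x (a : Heis g n k) : a⁻¹.x = -a.x := rfl
@[simp] lemma inv_y (a : Heis g n k) : a⁻¹.y = -a.y := rfl

instance : Group (Heis g n k) :=
  Group.ofLeftAxioms
    (fun a b c => by
      ext <;>
        simp [AddChar.map_add_eq_mul, mul_assoc, mul_comm, mul_left_comm, add_assoc])
    (fun a => by ext <;> simp)
    (fun a => by
      ext <;> simp [AddChar.map_neg_eq_inv, mul_comm, mul_left_comm, mul_assoc])

/-- The canonical projection `π : G(n) → K(n)`, `(α,x,y) ↦ (x,y)`. -/
def toK (h : Heis g n k) : KGrp g n k := (h.x, h.y)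

/-- The automorphism `D₋₁ : (α,x,y) ↦ (α,−x,−y)`. -/
def Dneg (h : Heis g n k) : Heis g n k := ⟨h.t, -h.x, -h.y⟩

/-- A symmetric element of the Heisenberg group: `D₋₁(h) = h⁻¹`. -/
def IsSymElem (h : Heis g n k) : Prop := Dneg h = h⁻¹

end Heis

/-- The `ψ`-semi-character identity:
`χ(v+w) = χ(v)·χ(w)·[ψ(w)₂(ψ(v)₁)]·[w₂(v₁)]⁻¹`. -/
def IsSemiChar (ψ : KGrp g n k → KGrp g n k) (χ : KGrp g n k → kˣ) : Prop :=
  ∀ v w : KGrp g n k,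
    χ (v + w) = χ v * χ w * (ψ w).2 (ψ v).1 * ((w.2 v.1)⁻¹ : kˣ)

/-- A symmetric (semi-)character: `χ(−v) = χ(v)`. -/
def IsSymmChar (χ : KGrp g n k → kˣ) : Prop := ∀ v : KGrp g n k, χ (-v) = χ v

/-- `ψ̄ ∈ Sp(K(n))`: an additive automorphism preserving the pairing `e_n`. -/
def IsSymplectic (ψ : KGrp g n k ≃+ KGrp g n k) : Prop :=
  ∀ v w : KGrp g n k, en (ψ v) (ψ w) = en v w


section Duality

variable {g n : ℕ} {k : Type*} [Field k]

private lemma addChar_map_sum {A M : Type*} [AddCommMonoid A] [CommMonoid M]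
    (ψ : AddChar A M) {ι : Type*} (s : Finset ι) (f : ι → A) :
    ψ (∑ i ∈ s, f i) = ∏ i ∈ s, ψ (f i) := by
  classical
  induction s using Finset.induction_on with
  | empty => simp
  | insert _ _ h ih => rw [Finset.sum_insert h, Finset.prod_insert h, AddChar.map_add_eq_mul, ih]

private lemma nsmul_zgrp (x : ZGrp g n) : n • x = 0 := funext fun i => by
  simp [nsmul_eq_mul, ZMod.natCast_self]

private lemma single_decomp [NeZero n] (i : Fin g) (a : ZMod n) :
    (Pi.single i a : ZGrp g n) = a.val • (Pi.single i 1 : ZGrp g n) := by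
  funext j
  rcases eq_or_ne j i with rfl | hj
  · simp [nsmul_eq_mul, ZMod.natCast_rightInverse a]
  · simp [Pi.single_eq_of_ne hj]

/-- The character `x ↦ ∏ i, E (b i * x i)` of `Z(n)`. -/
private def Fc (E : AddChar (ZMod n) kˣ) (b : ZGrp g n) : ZHat g n k :=
  AddChar.toAddMonoidHomEquiv.symm <| AddMonoidHom.mk'
    (fun x => Additive.ofMul (∏ i, E (b i * x i))) (fun x x' => by
      simp only [Pi.add_apply, mul_add, AddChar.map_add_eq_mul, Finset.prod_mul_distrib,
        ofMul_mul])

private lemma Fc_apply (E : AddChar (ZMod n) kˣ) (b x : ZGrp g n) :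
    Fc E b x = ∏ i, E (b i * x i) := rfl

private lemma Fc_add (E : AddChar (ZMod n) kˣ) (b b' : ZGrp g n) :
    Fc E (b + b') = Fc E b + Fc E b' := by
  apply DFunLike.ext
  intro x
  simp only [Fc_apply, AddChar.add_apply, Pi.add_apply, add_mul, AddChar.map_add_eq_mul,
    Finset.prod_mul_distrib]

/-- Every character of `Z(n)` is of the form `Fc E b`. -/
private lemma Fc_surjective [NeZero n] (hn : 0 < n) {ζ : kˣ} (hζ : IsPrimitiveRoot ζ n)
    (y : ZHat g n k) : ∃ b : ZGrp g n, y = Fc (AddChar.zmodChar n hζ.pow_eq_one) b := by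
  set E : AddChar (ZMod n) kˣ := AddChar.zmodChar n hζ.pow_eq_one with hE
  have Esurj : ∀ u : kˣ, u ^ n = 1 → ∃ a : ZMod n, E a = u := by
    intro u hu
    have hζk : IsPrimitiveRoot ((ζ : k)) n := IsPrimitiveRoot.coe_units_iff.mpr hζ
    obtain ⟨i, _, hiu⟩ := hζk.eq_pow_of_pow_eq_one
      (by rw [← Units.val_pow_eq_pow_val, hu, Units.val_one])
    refine ⟨(i : ZMod n), ?_⟩
    rw [hE, AddChar.zmodChar_apply']
    exact Units.ext (by rw [Units.val_pow_eq_pow_val]; exact hiu)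
  have root : ∀ x : ZGrp g n, (y x) ^ n = 1 := fun x => by
    rw [← AddChar.map_nsmul_eq_pow, nsmul_zgrp, AddChar.map_zero_eq_one]
  choose a ha using fun i : Fin g => Esurj (y (Pi.single i 1)) (root _)
  refine ⟨a, DFunLike.ext _ _ fun x => ?_⟩
  have hx : y x = y (∑ i, Pi.single i (x i)) := by rw [Finset.univ_sum_single]
  rw [hx, addChar_map_sum, Fc_apply]
  refine Finset.prod_congr rfl fun i _ => ?_
  rw [single_decomp i (x i), AddChar.map_nsmul_eq_pow, ← ha i, ← AddChar.map_nsmul_eq_pow,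
    nsmul_eq_mul, ZMod.natCast_rightInverse (x i), mul_comm]

/-- Characters of `Z(n)` separate points. -/
private lemma zgrp_sep [NeZero n] (hn : 0 < n) {ζ : kˣ} (hζ : IsPrimitiveRoot ζ n) (z : ZGrp g n)
    (h : ∀ y : ZHat g n k, y z = 1) : z = 0 := by
  set E : AddChar (ZMod n) kˣ := AddChar.zmodChar n hζ.pow_eq_one with hE
  funext i
  have hv := h (Fc E (Pi.single i 1))
  rw [Fc_apply] at hv
  have hprod : ∏ j, E ((Pi.single i 1 : ZGrp g n) j * z j) = E (z i) := by
    refine (Finset.prod_eq_single_of_mem i (Finset.mem_univ i) fun j _ hj => ?_).trans ?_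
    · rw [Pi.single_eq_of_ne hj, zero_mul, AddChar.map_zero_eq_one]
    · rw [Pi.single_eq_same, one_mul]
  have hEzi : E (z i) = 1 := by rw [← hprod]; exact hv
  have hdvd : n ∣ (z i).val := by
    rw [hE, AddChar.zmodChar_apply] at hEzi
    exact (hζ.pow_eq_one_iff_dvd _).mp hEzi
  exact (ZMod.val_eq_zero _).mp (Nat.eq_zero_of_dvd_of_lt hdvd (ZMod.val_lt _))

/-- Duality: every `kˣ`-valued homomorphism on `Ẑ(n)` is evaluation at a point. -/
private lemma exists_eval [NeZero n] (hn : 0 < n) {ζ : kˣ} (hζ : IsPrimitiveRoot ζ n)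
    (ρ : ZHat g n k → kˣ) (hρ : ∀ y z : ZHat g n k, ρ (y + z) = ρ y * ρ z) :
    ∃ c : ZGrp g n, ∀ y : ZHat g n k, ρ y = y c := by
  set E : AddChar (ZMod n) kˣ := AddChar.zmodChar n hζ.pow_eq_one with hE
  have Esurj : ∀ u : kˣ, u ^ n = 1 → ∃ a : ZMod n, E a = u := by
    intro u hu
    have hζk : IsPrimitiveRoot ((ζ : k)) n := IsPrimitiveRoot.coe_units_iff.mpr hζ
    obtain ⟨i, _, hiu⟩ := hζk.eq_pow_of_pow_eq_one
      (by rw [← Units.val_pow_eq_pow_val, hu, Units.val_one])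
    refine ⟨(i : ZMod n), ?_⟩
    rw [hE, AddChar.zmodChar_apply']
    exact Units.ext (by rw [Units.val_pow_eq_pow_val]; exact hiu)
  set ρ' : ZHat g n k →+ Additive kˣ :=
    AddMonoidHom.mk' (fun y => Additive.ofMul (ρ y)) (fun y z => by
      show Additive.ofMul (ρ (y + z)) = Additive.ofMul (ρ y) + Additive.ofMul (ρ z)
      rw [hρ]; rfl) with hρ'
  set Φ : ZGrp g n →+ Additive kˣ := ρ'.comp (AddMonoidHom.mk' (Fc E) (Fc_add E)) with hΦ
  have hΦval : ∀ b : ZGrp g n, Additive.toMul (Φ b) = ρ (Fc E b) := fun b => rfl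
  have hroot : ∀ i : Fin g, ρ (Fc E (Pi.single i 1)) ^ n = 1 := by
    intro i
    have h1 : Φ (n • Pi.single i (1 : ZMod n)) = 0 := by rw [nsmul_zgrp]; exact map_zero Φ
    have h2 := map_nsmul Φ n (Pi.single i (1 : ZMod n))
    rw [h1] at h2
    have := congrArg Additive.toMul h2.symm
    rw [toMul_nsmul, hΦval] at this
    simpa using this
  choose c hc using fun i : Fin g => Esurj (ρ (Fc E (Pi.single i 1))) (hroot i)
  refine ⟨c, fun y => ?_⟩
  obtain ⟨b, rfl⟩ := Fc_surjective hn hζ y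
  have hb : b = ∑ i, Pi.single i (b i) := (Finset.univ_sum_single b).symm
  have key : ρ (Fc E b) = ∏ i, ρ (Fc E (Pi.single i 1)) ^ (b i).val := by
    rw [← hΦval]
    conv_lhs => rw [hb]
    rw [map_sum]
    rw [show Additive.toMul (∑ i, Φ (Pi.single i (b i)))
        = ∏ i, Additive.toMul (Φ (Pi.single i (b i))) from toMul_sum _ _]
    refine Finset.prod_congr rfl fun i _ => ?_
    rw [single_decomp i (b i), map_nsmul, toMul_nsmul, hΦval]
  rw [key, Fc_apply]
  refine Finset.prod_congr rfl fun i _ => ?_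
  rw [← hc i, ← AddChar.map_nsmul_eq_pow, nsmul_eq_mul, ZMod.natCast_rightInverse (b i)]

end Duality

/-- two symmetric `ψ̄`-semi-characters differ by a `{±1}`-valued
character of the form `e_n(c,·)` with `2c = 0`; in particular they coincide when
`n` is odd. -/
theorem symmetric_semichars_differ_by_two_torsion (g n : ℕ) (hg : 1 ≤ g) (hn : 1 ≤ n)
    (k : Type*) [Field k] (ζ : k) (hζ : IsPrimitiveRoot ζ n) (hchar : (n : k) ≠ 0)
    (ψ : KGrp g n k ≃+ KGrp g n k) (hψ : IsSymplectic ψ)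
    (χ₁ χ₂ : KGrp g n k → kˣ)
    (h₁ : IsSemiChar (⇑ψ) χ₁) (h₂ : IsSemiChar (⇑ψ) χ₂)
    (hs₁ : IsSymmChar χ₁) (hs₂ : IsSymmChar χ₂) :
    (∀ v w : KGrp g n k,
      χ₁ (v + w) * (χ₂ (v + w))⁻¹ = (χ₁ v * (χ₂ v)⁻¹) * (χ₁ w * (χ₂ w)⁻¹)) ∧
    (∀ v : KGrp g n k, χ₁ v * (χ₂ v)⁻¹ = 1 ∨ χ₁ v * (χ₂ v)⁻¹ = -1) ∧
    (∃ c : KGrp g n k, c + c = 0 ∧ ∀ v : KGrp g n k, χ₁ v = χ₂ v * en c v) ∧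
    (Odd n → χ₁ = χ₂) := by
  haveI : NeZero n := ⟨Nat.one_le_iff_ne_zero.mp hn⟩
  have hζ0 : ζ ≠ 0 := by
    intro h
    have h1 : (1 : k) = 0 := by
      rw [← hζ.pow_eq_one, h, zero_pow (Nat.one_le_iff_ne_zero.mp hn)]
    exact one_ne_zero h1
  set ζu : kˣ := Units.mk0 ζ hζ0 with hζudef
  have hζu : IsPrimitiveRoot ζu n := by
    rw [← IsPrimitiveRoot.coe_units_iff]
    simpa [hζudef] using hζ
  set ρ : KGrp g n k → kˣ := fun v => χ₁ v * (χ₂ v)⁻¹ with hρdef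
  -- ρ is a homomorphism
  have hom : ∀ v w : KGrp g n k, ρ (v + w) = ρ v * ρ w := by
    intro v w
    have e1 := h₁ v w
    have e2 := h₂ v w
    simp only [hρdef]
    rw [e1, e2, Units.ext_iff]
    push_cast
    field_simp
  have ρ0 : ρ 0 = 1 := by
    have h := hom 0 0
    have h00 : (0 : KGrp g n k) + 0 = 0 := add_zero (0 : KGrp g n k)
    rw [h00] at h
    exact left_eq_mul.mp h
  have ρneg : ∀ v, ρ (-v) = ρ v := fun v => by
    simp only [hρdef, hs₁ v, hs₂ v]
  have sq : ∀ v, ρ v * ρ v = 1 := fun v => by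
    calc ρ v * ρ v = ρ v * ρ (-v) := by rw [ρneg]
      _ = ρ (v + -v) := (hom _ _).symm
      _ = 1 := by
          have hvv : v + -v = 0 := add_neg_cancel v
          rw [hvv, ρ0]
  have pm : ∀ v, ρ v = 1 ∨ ρ v = -1 := by
    intro v
    have hk : (ρ v : k) * (ρ v : k) = 1 := by rw [← Units.val_mul, sq v, Units.val_one]
    rcases mul_self_eq_one_iff.mp hk with h | h
    · exact Or.inl (Units.ext (by rw [h, Units.val_one]))
    · exact Or.inr (Units.ext (by rw [h, Units.val_neg, Units.val_one]))
  -- splitting of ρ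
  have hsplit : ∀ v : KGrp g n k,
      ρ v = ρ (v.1, (0 : ZHat g n k)) * ρ ((0 : ZGrp g n), v.2) := by
    intro v
    have ha : v.1 + (0 : ZGrp g n) = v.1 := add_zero v.1
    have hb : (0 : ZHat g n k) + v.2 = v.2 := zero_add v.2
    have hv : (v.1, (0 : ZHat g n k)) + ((0 : ZGrp g n), v.2) = v := Prod.ext ha hb
    rw [← hom, hv]
  -- c₁ from duality applied to y ↦ ρ(0,y)⁻¹
  obtain ⟨c₁, hc₁⟩ := exists_eval (Nat.one_le_iff_ne_zero.mp hn |> Nat.pos_of_ne_zero) hζu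
    (fun y : ZHat g n k => (ρ ((0 : ZGrp g n), y))⁻¹)
    (fun y z => by
      show (ρ ((0 : ZGrp g n), y + z))⁻¹
        = (ρ ((0 : ZGrp g n), y))⁻¹ * (ρ ((0 : ZGrp g n), z))⁻¹
      have h00 : (0 : ZGrp g n) + 0 = 0 := add_zero (0 : ZGrp g n)
      have hyz : ((0 : ZGrp g n), y) + ((0 : ZGrp g n), z) = ((0 : ZGrp g n), y + z) :=
        Prod.ext h00 rfl
      rw [← hyz, hom, mul_inv])
  -- c₂ : the character x ↦ ρ(x,0)
  set c₂ : ZHat g n k := AddChar.toAddMonoidHomEquiv.symm <| AddMonoidHom.mk'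
    (fun x : ZGrp g n => Additive.ofMul (ρ (x, (0 : ZHat g n k))))
    (fun x x' => by
      show Additive.ofMul (ρ ((x + x' : ZGrp g n), (0 : ZHat g n k)))
        = Additive.ofMul (ρ (x, (0 : ZHat g n k))) + Additive.ofMul (ρ (x', (0 : ZHat g n k)))
      have h00 : (0 : ZHat g n k) + 0 = 0 := add_zero (0 : ZHat g n k)
      have hxx : (x, (0 : ZHat g n k)) + (x', (0 : ZHat g n k))
          = ((x + x' : ZGrp g n), (0 : ZHat g n k)) := Prod.ext rfl h00
      rw [← hxx, hom]
      rfl) with hc₂def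
  have hc₂ : ∀ x : ZGrp g n, c₂ x = ρ (x, (0 : ZHat g n k)) := fun x => rfl
  have hc₁' : ∀ y : ZHat g n k, (ρ ((0 : ZGrp g n), y))⁻¹ = y c₁ := hc₁
  have hen : ∀ v : KGrp g n k, en (c₁, c₂) v = ρ v := by
    intro v
    show c₂ v.1 * (v.2 c₁)⁻¹ = ρ v
    rw [hc₂, ← hc₁' v.2, inv_inv, ← hsplit]
  refine ⟨fun v w => hom v w, pm, ⟨(c₁, c₂), ?_, ?_⟩, ?_⟩
  · -- 2c = 0
    have hc1 : c₁ + c₁ = 0 := by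
      refine zgrp_sep (Nat.pos_of_ne_zero (Nat.one_le_iff_ne_zero.mp hn)) hζu _ fun y => ?_
      rw [AddChar.map_add_eq_mul, ← hc₁' y, ← mul_inv, sq, inv_one]
    have hc2 : c₂ + c₂ = 0 := by
      refine DFunLike.ext _ _ fun x => ?_
      rw [AddChar.add_apply, hc₂, sq, AddChar.zero_apply]
    rw [show ((c₁, c₂) : KGrp g n k) + (c₁, c₂) = (c₁ + c₁, c₂ + c₂) from rfl, hc1, hc2]
    rfl
  · -- χ₁ = χ₂ · en(c,·)
    intro v
    rw [hen v]
    show χ₁ v = χ₂ v * (χ₁ v * (χ₂ v)⁻¹)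
    rw [mul_comm (χ₁ v), ← mul_assoc, mul_inv_cancel, one_mul]
  · -- odd case
    intro hodd
    funext v
    have hpow' : ∀ (m : ℕ) (w : KGrp g n k), ρ (m • w) = ρ w ^ m := by
      intro m
      induction m with
      | zero =>
          intro w
          have h0w : (0 : ℕ) • w = 0 := zero_nsmul w
          rw [h0w, ρ0, pow_zero]
      | succ p ih =>
          intro w
          have hs : (p + 1) • w = p • w + w := succ_nsmul w p
          rw [hs, hom, ih, pow_succ]
    have hnv : n • v = 0 := by
      have h1 : n • v.1 = 0 := nsmul_zgrp v.1
      have h2 : n • v.2 = 0 := by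
        refine DFunLike.ext _ _ fun x => ?_
        rw [AddChar.nsmul_apply, ← AddChar.map_nsmul_eq_pow, nsmul_zgrp,
          AddChar.map_zero_eq_one, AddChar.zero_apply]
      calc n • v = (n • v.1, n • v.2) := rfl
        _ = 0 := by rw [h1, h2]; rfl
    have hpow : ρ v ^ n = 1 := by rw [← hpow', hnv, ρ0]
    obtain ⟨m, hm⟩ := hodd
    have h2 : ρ v ^ 2 = 1 := by rw [pow_two]; exact sq v
    have hρv : ρ v = 1 := by
      have hh : ρ v ^ n = ρ v := by
        rw [hm, pow_add, pow_mul, h2, one_pow, pow_one, one_mul]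
      exact hh.symm.trans hpow
    exact mul_inv_eq_one.mp hρv

end ThetaPaper
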